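/- Let K = ℝ(w) and R_P = K[x,y,z]_{(x,y,z)}/(x² + y² − (w+1)z²), with maximal ideal PR_P = (x,y,z). Then the class [R_P/PR_P] is 2-torsion in the Grothendieck group G(R_P), i.e., 2·[R_P/PR_P] = 0. -/

import Mathlib

/-!
Statement 16: for `K = ℝ(w)` and `R_P = K[x,y,z]_{(x,y,z)}/(x² + y² − (w+1)z²)` with maximal
ideal `P R_P = (x,y,z)`, the class `[R_P/PR_P]` is `2`-torsion in `G(R_P)`.
-/

universe u

/-- A bundled finitely generated module over `R`. -/
structure FGModuleRep (R : Type u) [CommRing R] : Type (u + 1) where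
  carrier : Type u
  [isAddCommGroup : AddCommGroup carrier]
  [isModule : Module R carrier]
  [isFinite : Module.Finite R carrier]

attribute [instance] FGModuleRep.isAddCommGroup FGModuleRep.isModule FGModuleRep.isFinite

variable (R : Type u) [CommRing R]

/-- The subgroup of relations coming from short exact sequences of f.g. modules. -/
def sesRelations : AddSubgroup (FreeAbelianGroup (FGModuleRep R)) :=
  AddSubgroup.closure
    { z | ∃ (M₁ M₂ M₃ : FGModuleRep R) (f : M₁.carrier →ₗ[R] M₂.carrier)
        (g : M₂.carrier →ₗ[R] M₃.carrier),
        Function.Injective f ∧ Function.Surjective g ∧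
        LinearMap.range f = LinearMap.ker g ∧
        z = FreeAbelianGroup.of M₂ - FreeAbelianGroup.of M₁ - FreeAbelianGroup.of M₃ }

/-- The Grothendieck group of finitely generated `R`-modules. -/
def GGroup : Type (u + 1) :=
  FreeAbelianGroup (FGModuleRep R) ⧸ sesRelations R

noncomputable instance : AddCommGroup (GGroup R) :=
  QuotientAddGroup.Quotient.addCommGroup _

/-- The class of a finitely generated module in the Grothendieck group. -/
def GGroup.cls (M : Type u) [AddCommGroup M] [Module R M] [Module.Finite R M] : GGroup R :=
  QuotientAddGroup.mk (FreeAbelianGroup.of ⟨M⟩)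

noncomputable section

open MvPolynomial

/-- The field `K = ℝ(w)` of rational functions in one variable over `ℝ`. -/
abbrev K : Type := RatFunc ℝ

/-- The irrelevant maximal ideal `(x, y, z)` of `K[x, y, z]`
(with `x = X 0`, `y = X 1`, `z = X 2`). -/
def mxIdeal : Ideal (MvPolynomial (Fin 3) K) :=
  Ideal.span {X 0, X 1, X 2}

lemma mxIdeal_eq_ker :
    mxIdeal = RingHom.ker (constantCoeff : MvPolynomial (Fin 3) K →+* K) := by
  have hrange : ({X 0, X 1, X 2} : Set (MvPolynomial (Fin 3) K)) =
      Set.range (X : Fin 3 → MvPolynomial (Fin 3) K) := by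
    ext p
    constructor
    · rintro (rfl | rfl | rfl) <;> exact ⟨_, rfl⟩
    · rintro ⟨i, rfl⟩
      fin_cases i <;> simp
  rw [mxIdeal, hrange]
  apply le_antisymm
  · rw [Ideal.span_le]
    rintro _ ⟨i, rfl⟩
    simp [RingHom.mem_ker]
  · intro p hp
    rw [RingHom.mem_ker] at hp
    have key : ∀ q : MvPolynomial (Fin 3) K,
        q - C (constantCoeff q) ∈
          Ideal.span (Set.range (X : Fin 3 → MvPolynomial (Fin 3) K)) := by
      intro q
      induction q using MvPolynomial.induction_on with
      | C a => simp
      | add p q hp hq =>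
          have h := Ideal.add_mem _ hp hq
          have heq : p + q - C (constantCoeff (p + q)) =
              p - C (constantCoeff p) + (q - C (constantCoeff q)) := by
            rw [map_add, C_add]; ring
          rwa [heq]
      | mul_X p i hp =>
          have hx : (X i : MvPolynomial (Fin 3) K) ∈
              Ideal.span (Set.range (X : Fin 3 → MvPolynomial (Fin 3) K)) :=
            Ideal.subset_span ⟨i, rfl⟩
          have heq : p * X i - C (constantCoeff (p * X i)) = p * X i := by simp
          rw [heq]
          exact Ideal.mul_mem_left _ _ hx
    have h := key p
    rwa [hp, map_zero, sub_zero] at h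

instance : mxIdeal.IsPrime := by
  rw [mxIdeal_eq_ker]
  exact RingHom.ker_isPrime _

/-- The quadratic polynomial `x² + y² − (w+1)z² ∈ K[x,y,z]`. -/
def quadElt : MvPolynomial (Fin 3) K :=
  X 0 ^ 2 + X 1 ^ 2 - C (RatFunc.X + 1) * X 2 ^ 2

lemma quadElt_mem_mxIdeal : quadElt ∈ mxIdeal := by
  have h0 : (X 0 : MvPolynomial (Fin 3) K) ∈ mxIdeal :=
    Ideal.subset_span (by simp)
  have h1 : (X 1 : MvPolynomial (Fin 3) K) ∈ mxIdeal :=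
    Ideal.subset_span (by simp)
  have h2 : (X 2 : MvPolynomial (Fin 3) K) ∈ mxIdeal :=
    Ideal.subset_span (by simp)
  refine Ideal.sub_mem _ (Ideal.add_mem _ ?_ ?_) ?_
  · exact Ideal.pow_mem_of_mem _ h0 2 (by norm_num)
  · exact Ideal.pow_mem_of_mem _ h1 2 (by norm_num)
  · exact Ideal.mul_mem_left _ _ (Ideal.pow_mem_of_mem _ h2 2 (by norm_num))

/-- The local ring `R_P = K[x,y,z]_{(x,y,z)}/(x² + y² − (w+1)z²)`. -/
def LocPoly3 : Type := Localization.AtPrime mxIdeal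

instance : CommRing LocPoly3 := by unfold LocPoly3; infer_instance

instance : Algebra (MvPolynomial (Fin 3) K) LocPoly3 := by unfold LocPoly3; infer_instance

/-- The ring `R_P = K[x,y,z]_{(x,y,z)}/(x² + y² − (w+1)z²)`. -/
def RP : Type :=
  LocPoly3 ⧸ Ideal.span {algebraMap (MvPolynomial (Fin 3) K) LocPoly3 quadElt}

instance : CommRing RP := by unfold RP; infer_instance

/-- The image of a polynomial in `R_P`. -/
def toRP (p : MvPolynomial (Fin 3) K) : RP :=
  Ideal.Quotient.mk _ (algebraMap (MvPolynomial (Fin 3) K) LocPoly3 p)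

/-- The maximal ideal `P R_P = (x, y, z)` of `R_P`. -/
def mRP : Ideal RP :=
  Ideal.span {toRP (X 0), toRP (X 1), toRP (X 2)}

instance : Module.Finite RP (RP ⧸ mRP) :=
  Module.Finite.of_surjective (Ideal.Quotient.mkₐ RP mRP).toLinearMap
    (Ideal.Quotient.mkₐ_surjective RP mRP)

namespace TT

open MvPolynomial

local notation "S" => MvPolynomial (Fin 3) K

section SLemmas

variable (g : Fin 3 → S)

lemma sub_aeval_mem (s : Set (Fin 3)) (h0 : ∀ i ∈ s, g i = 0) (h1 : ∀ i ∉ s, g i = X i)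
    (p : S) : p - aeval g p ∈ Ideal.span ((fun i => (X i : S)) '' s) := by
  induction p using MvPolynomial.induction_on with
  | C a => simp [algebraMap_eq]
  | add p q hp hq =>
      have h := Ideal.add_mem _ hp hq
      have heq : p + q - aeval g (p + q) = p - aeval g p + (q - aeval g q) := by
        rw [map_add]; ring
      rwa [heq]
  | mul_X p i hp =>
      by_cases hi : i ∈ s
      · rw [map_mul, aeval_X, h0 i hi, mul_zero, sub_zero]
        exact Ideal.mul_mem_left _ _ (Ideal.subset_span ⟨i, hi, rfl⟩)
      · rw [map_mul, aeval_X, h1 i hi]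
        have heq : p * X i - aeval g p * X i = (p - aeval g p) * X i := by ring
        rw [heq]
        exact Ideal.mul_mem_right _ _ hp

lemma mem_span_iff_aeval (s : Set (Fin 3)) (h0 : ∀ i ∈ s, g i = 0) (h1 : ∀ i ∉ s, g i = X i)
    (p : S) :
    p ∈ Ideal.span ((fun i => (X i : S)) '' s) ↔ aeval g p = 0 := by
  constructor
  · intro hp
    have hle : Ideal.span ((fun i => (X i : S)) '' s) ≤
        RingHom.ker (aeval g : S →ₐ[K] S).toRingHom := by
      rw [Ideal.span_le]
      rintro _ ⟨i, hi, rfl⟩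
      simp [RingHom.mem_ker, h0 i hi]
    exact hle hp
  · intro hp
    have h := sub_aeval_mem g s h0 h1 p
    rwa [hp, sub_zero] at h

end SLemmas

/-- substitution killing `x` and `y`. -/
noncomputable def gxy : Fin 3 → S := ![0, 0, X 2]

/-- substitution killing only `x`. -/
noncomputable def gx : Fin 3 → S := ![0, X 1, X 2]

lemma memXY_iff (p : S) :
    p ∈ Ideal.span {(X 0 : S), X 1} ↔ aeval gxy p = 0 := by
  have himg : ((fun i => (X i : S)) '' ({0, 1} : Set (Fin 3))) = {X 0, X 1} := by
    rw [Set.image_insert_eq, Set.image_singleton]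
  rw [← himg]
  refine mem_span_iff_aeval gxy {0, 1} ?_ ?_ p
  · rintro i (rfl | rfl) <;> rfl
  · intro i hi
    fin_cases i
    · exact absurd (Set.mem_insert _ _) hi
    · exact absurd (Set.mem_insert_of_mem _ rfl) hi
    · rfl

lemma memX_iff (p : S) :
    p ∈ Ideal.span {(X 0 : S)} ↔ aeval gx p = 0 := by
  have himg : ((fun i => (X i : S)) '' ({0} : Set (Fin 3))) = {X 0} := by
    rw [Set.image_singleton]
  rw [← himg]
  refine mem_span_iff_aeval gx {0} ?_ ?_ p
  · rintro i rfl; rfl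
  · intro i hi
    fin_cases i
    · exact absurd rfl hi
    · rfl
    · rfl

lemma prime_X0 : Prime (X 0 : S) := by
  have hker : Ideal.span {(X 0 : S)} = RingHom.ker (aeval gx : S →ₐ[K] S).toRingHom := by
    ext p
    rw [memX_iff, RingHom.mem_ker]
    rfl
  have hprime : (Ideal.span {(X 0 : S)}).IsPrime := by
    rw [hker]; exact RingHom.ker_isPrime _
  exact (Ideal.span_singleton_prime (X_ne_zero 0)).mp hprime


lemma aeval_gxy_X0 : aeval gxy (X 0 : S) = 0 := by simp [gxy]
lemma aeval_gxy_X1 : aeval gxy (X 1 : S) = 0 := by simp [gxy]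
lemma aeval_gxy_X2 : aeval gxy (X 2 : S) = X 2 := by simp [gxy]
lemma aeval_gx_X0 : aeval gx (X 0 : S) = 0 := by simp [gx]
lemma aeval_gx_X1 : aeval gx (X 1 : S) = X 1 := by simp [gx]

lemma aeval_gxy_quad : aeval gxy quadElt = -(C (RatFunc.X + 1) * X 2 ^ 2) := by
  rw [quadElt, map_sub, map_add, map_pow, map_pow, map_mul, map_pow, aeval_gxy_X0, aeval_gxy_X1,
    aeval_gxy_X2, aeval_C]
  rw [algebraMap_eq]
  ring

lemma aeval_gx_quad : aeval gx quadElt = X 1 ^ 2 - C (RatFunc.X + 1) * X 2 ^ 2 := by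
  rw [quadElt, map_sub, map_add, map_pow, map_pow, map_mul, map_pow, aeval_gx_X0, aeval_gx_X1,
    aeval_C]
  rw [algebraMap_eq]
  simp [gx]

lemma wp1_ne_zero : (RatFunc.X + 1 : K) ≠ 0 := by
  have h : (Polynomial.X + Polynomial.C 1 : Polynomial ℝ) ≠ 0 := Polynomial.X_add_C_ne_zero 1
  have h2 : algebraMap (Polynomial ℝ) K (Polynomial.X + Polynomial.C 1) ≠ 0 := by
    rw [Ne, map_eq_zero_iff _ (IsFractionRing.injective (Polynomial ℝ) K)]
    exact h
  rw [map_add, RatFunc.algebraMap_X] at h2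
  simpa using h2

lemma CX2sq_ne_zero : (C (RatFunc.X + 1) * X 2 ^ 2 : S) ≠ 0 := by
  apply mul_ne_zero
  · rw [Ne, MvPolynomial.C_eq_zero]
    exact wp1_ne_zero
  · exact pow_ne_zero _ (X_ne_zero 2)

lemma X0_not_dvd_X1 : ¬ (X 0 : S) ∣ X 1 := by
  rintro ⟨t, ht⟩
  have h := congrArg (aeval gx) ht
  rw [map_mul, aeval_gx_X0, aeval_gx_X1, zero_mul] at h
  exact X_ne_zero 1 h

lemma X0_not_dvd_quad : ¬ (X 0 : S) ∣ quadElt := by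
  rintro ⟨t, ht⟩
  have h := congrArg (aeval gx) ht
  rw [map_mul, aeval_gx_X0, aeval_gx_quad, zero_mul, sub_eq_zero] at h
  have h1 := congrArg (MvPolynomial.coeff (Finsupp.single 1 2)) h
  have hne : ¬ (Finsupp.single (2 : Fin 3) 2 = Finsupp.single (1 : Fin 3) 2) := by
    simp [Finsupp.single_eq_single_iff]
  simp only [MvPolynomial.coeff_X_pow, MvPolynomial.coeff_C_mul, if_pos rfl, if_neg hne] at h1
  simp at h1

/-- The key syzygy computation in the polynomial ring. -/
lemma syzygy_S (a b c : S) (h : a * X 0 + b * X 1 = c * quadElt) :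
    ∃ p q s : S, a = p * quadElt - s * X 1 ∧ b = q * quadElt + s * X 0 := by
  have hc : c ∈ Ideal.span {(X 0 : S), X 1} := by
    rw [memXY_iff]
    have h2 := congrArg (aeval gxy) h
    rw [map_add, map_mul, map_mul, map_mul, aeval_gxy_X0, aeval_gxy_X1, aeval_gxy_quad,
      mul_zero, mul_zero, add_zero] at h2
    have h3 : aeval gxy c * (C (RatFunc.X + 1) * X 2 ^ 2) = 0 := by linear_combination h2
    rcases mul_eq_zero.mp h3 with h4 | h4
    · exact h4
    · exact absurd h4 CX2sq_ne_zero
  obtain ⟨p, q, hpq⟩ := Submodule.mem_span_pair.mp hc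
  simp only [smul_eq_mul] at hpq
  have hAB : (a - p * quadElt) * X 0 = -((b - q * quadElt) * X 1) := by
    linear_combination h - quadElt * hpq
  have hdvd : (X 0 : S) ∣ (b - q * quadElt) * X 1 :=
    ⟨-(a - p * quadElt), by linear_combination hAB⟩
  rcases prime_X0.2.2 _ _ hdvd with h4 | h4
  · obtain ⟨s, hs⟩ := h4
    refine ⟨p, q, s, ?_, by linear_combination hs⟩
    have h5 : (a - p * quadElt) * X 0 = (-s * X 1) * X 0 := by
      rw [hAB, hs]; ring
    have h6 := mul_right_cancel₀ (X_ne_zero 0) h5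
    linear_combination h6
  · exact absurd h4 X0_not_dvd_X1

/-- If `r * z = a * x + b * y + c * f` then `r` has zero constant coefficient. -/
lemma zmul_S (r a b c : S) (h : r * X 2 = a * X 0 + b * X 1 + c * quadElt) :
    constantCoeff r = 0 := by
  have h2 := congrArg (aeval gxy) h
  rw [map_mul, map_add, map_add, map_mul, map_mul, map_mul, aeval_gxy_X0, aeval_gxy_X1,
    aeval_gxy_X2, aeval_gxy_quad, mul_zero, mul_zero, add_zero, zero_add] at h2
  have h3 : aeval gxy r * X 2 = (-(aeval gxy c * C (RatFunc.X + 1) * X 2)) * X 2 := by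
    linear_combination h2
  have h4 := mul_right_cancel₀ (X_ne_zero 2) h3
  have h5 : constantCoeff (aeval gxy r) = constantCoeff r := by
    have hcomp : (constantCoeff : S →+* K).comp (aeval gxy : S →ₐ[K] S).toRingHom
        = constantCoeff := by
      apply MvPolynomial.ringHom_ext
      · intro k; simp [algebraMap_eq]
      · intro i; fin_cases i <;> simp [gxy]
    exact congrFun (congrArg (fun f => f.toFun) hcomp) r
  rw [← h5, h4]
  simp

/-- If `r * x = c * f` then `r` is a multiple of `f`. -/
lemma xmul_S (r c : S) (h : r * X 0 = c * quadElt) : ∃ d : S, r = d * quadElt := by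
  have hdvd : (X 0 : S) ∣ c * quadElt := ⟨r, by rw [← h]; ring⟩
  rcases prime_X0.2.2 _ _ hdvd with h4 | h4
  · obtain ⟨d, hd⟩ := h4
    refine ⟨d, ?_⟩
    have h5 : r * X 0 = (d * quadElt) * X 0 := by rw [h, hd]; ring
    exact mul_right_cancel₀ (X_ne_zero 0) h5
  · exact absurd h4 X0_not_dvd_quad


section Localization

noncomputable def algS : MvPolynomial (Fin 3) K →+* LocPoly3 :=
  algebraMap (MvPolynomial (Fin 3) K) LocPoly3

noncomputable def πR : LocPoly3 →+* RP :=
  Ideal.Quotient.mk (Ideal.span {algebraMap (MvPolynomial (Fin 3) K) LocPoly3 quadElt})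

noncomputable def θ : MvPolynomial (Fin 3) K →+* RP := πR.comp algS

lemma θ_apply (p : S) : θ p = toRP p := rfl

instance : IsLocalization mxIdeal.primeCompl LocPoly3 := by
  unfold LocPoly3
  exact Localization.isLocalization

lemma primeCompl_le : mxIdeal.primeCompl ≤ nonZeroDivisors S := by
  intro u hu
  refine mem_nonZeroDivisors_of_ne_zero ?_
  rintro rfl
  exact hu (Ideal.zero_mem _)

lemma algS_inj : Function.Injective algS :=
  IsLocalization.injective LocPoly3 primeCompl_le

lemma πR_surj : Function.Surjective πR :=
  Ideal.Quotient.mk_surjective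

lemma πR_ker (ρ : LocPoly3) : πR ρ = 0 ↔ ρ ∈ Ideal.span {algS quadElt} :=
  Ideal.Quotient.eq_zero_iff_mem

lemma isUnit_θ {u : S} (hu : u ∈ mxIdeal.primeCompl) : IsUnit (θ u) := by
  have h1 : IsUnit (algS u) := IsLocalization.map_units LocPoly3 ⟨u, hu⟩
  exact h1.map πR

lemma mem_primeCompl_iff {u : S} : u ∈ mxIdeal.primeCompl ↔ constantCoeff u ≠ 0 := by
  have h : u ∈ mxIdeal.primeCompl ↔ u ∉ mxIdeal := Iff.rfl
  rw [h, mxIdeal_eq_ker]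
  simp [RingHom.mem_ker]

lemma C_mem_primeCompl : (C (RatFunc.X + 1) : S) ∈ mxIdeal.primeCompl := by
  rw [mem_primeCompl_iff]
  simpa using wp1_ne_zero

lemma toRP_quad : toRP quadElt = 0 :=
  Ideal.Quotient.eq_zero_iff_mem.mpr (Ideal.subset_span rfl)

/-- clear denominators of four elements of the localization -/
lemma clear4 (α β γ δ : LocPoly3) :
    ∃ (u : mxIdeal.primeCompl) (a₀ b₀ c₀ d₀ : S),
      algS a₀ = algS u * α ∧ algS b₀ = algS u * β ∧
      algS c₀ = algS u * γ ∧ algS d₀ = algS u * δ := by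
  obtain ⟨u, hu⟩ :=
    IsLocalization.exist_integer_multiples_of_finite mxIdeal.primeCompl ![α, β, γ, δ]
  obtain ⟨a₀, ha⟩ := hu 0
  obtain ⟨b₀, hb⟩ := hu 1
  obtain ⟨c₀, hc⟩ := hu 2
  obtain ⟨d₀, hd⟩ := hu 3
  simp only [Matrix.cons_val_zero, Matrix.cons_val_one, Matrix.head_cons,
    show (![α, β, γ, δ] : Fin 4 → LocPoly3) 2 = γ from rfl,
    show (![α, β, γ, δ] : Fin 4 → LocPoly3) 3 = δ from rfl] at ha hb hc hd
  refine ⟨u, a₀, b₀, c₀, d₀, ?_, ?_, ?_, ?_⟩ <;> unfold algS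
  · rw [ha]; exact Algebra.smul_def _ _
  · rw [hb]; exact Algebra.smul_def _ _
  · rw [hc]; exact Algebra.smul_def _ _
  · rw [hd]; exact Algebra.smul_def _ _

/-- The syzygy lemma in `R_P`. -/
lemma RP_syz (A B : RP) (h : A * toRP (X 0) + B * toRP (X 1) = 0) :
    ∃ t : RP, A = -(t * toRP (X 1)) ∧ B = t * toRP (X 0) := by
  obtain ⟨α, rfl⟩ := πR_surj A
  obtain ⟨β, rfl⟩ := πR_surj B
  have hmem : α * algS (X 0) + β * algS (X 1) ∈ Ideal.span {algS quadElt} := by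
    rw [← πR_ker, map_add, map_mul, map_mul]
    exact h
  obtain ⟨γ, hγ⟩ := Ideal.mem_span_singleton'.mp hmem
  obtain ⟨u, a₀, b₀, c₀, -, ha, hb, hc, -⟩ := clear4 α β γ 0
  have hS : a₀ * X 0 + b₀ * X 1 = c₀ * quadElt := by
    apply algS_inj
    simp only [map_add, map_mul]
    rw [ha, hb, hc]
    linear_combination (-(algS ↑u)) * hγ
  obtain ⟨p, q, s, hA, hB⟩ := syzygy_S a₀ b₀ c₀ hS
  have hAR : θ ↑u * πR α = toRP a₀ := by
    rw [← θ_apply, θ, RingHom.comp_apply, ← map_mul, ← ha]; rfl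
  have hBR : θ ↑u * πR β = toRP b₀ := by
    rw [← θ_apply, θ, RingHom.comp_apply, ← map_mul, ← hb]; rfl
  obtain ⟨v, hv⟩ := isUnit_θ u.2
  have hα : πR α = ↑v⁻¹ * toRP a₀ := by
    rw [← hAR, ← hv, Units.inv_mul_cancel_left]
  have hβ : πR β = ↑v⁻¹ * toRP b₀ := by
    rw [← hBR, ← hv, Units.inv_mul_cancel_left]
  have ha' : toRP a₀ = -(toRP s * toRP (X 1)) := by
    rw [hA, ← θ_apply]
    simp only [map_sub, map_mul, θ_apply]
    rw [toRP_quad, mul_zero, zero_sub]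
  have hb' : toRP b₀ = toRP s * toRP (X 0) := by
    rw [hB, ← θ_apply]
    simp only [map_add, map_mul, θ_apply]
    rw [toRP_quad, mul_zero, zero_add]
  refine ⟨↑v⁻¹ * toRP s, ?_, ?_⟩
  · rw [hα, ha']; ring
  · rw [hβ, hb']; ring

/-- `x` is a regular element of `R_P`. -/
lemma RP_xreg (r : RP) (h : r * toRP (X 0) = 0) : r = 0 := by
  obtain ⟨ρ, rfl⟩ := πR_surj r
  have hmem : ρ * algS (X 0) ∈ Ideal.span {algS quadElt} := by
    rw [← πR_ker, map_mul]
    exact h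
  obtain ⟨γ, hγ⟩ := Ideal.mem_span_singleton'.mp hmem
  obtain ⟨u, r₀, c₀, -, -, hr, hc, -⟩ := clear4 ρ γ 0 0
  have hS : r₀ * X 0 = c₀ * quadElt := by
    apply algS_inj
    simp only [map_mul]
    rw [hr, hc]
    linear_combination (-(algS ↑u)) * hγ
  obtain ⟨d, hd⟩ := xmul_S r₀ c₀ hS
  have hR0 : toRP r₀ = 0 := by
    rw [hd, ← θ_apply, map_mul, θ_apply, θ_apply, toRP_quad, mul_zero]
  have hAR : θ ↑u * πR ρ = toRP r₀ := by
    rw [← θ_apply, θ, RingHom.comp_apply, ← map_mul, ← hr]; rfl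
  obtain ⟨v, hv⟩ := isUnit_θ u.2
  rw [← Units.inv_mul_cancel_left v (πR ρ), hv, hAR, hR0, mul_zero]

/-- If `r·z ∈ (x,y)` in `R_P` then `r` is in the maximal ideal. -/
lemma RP_zker (r A B : RP) (h : A * toRP (X 0) + B * toRP (X 1) = r * toRP (X 2)) :
    r ∈ mRP := by
  obtain ⟨ρ, rfl⟩ := πR_surj r
  obtain ⟨α, rfl⟩ := πR_surj A
  obtain ⟨β, rfl⟩ := πR_surj B
  have hmem : ρ * algS (X 2) - α * algS (X 0) - β * algS (X 1)
      ∈ Ideal.span {algS quadElt} := by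
    rw [← πR_ker, map_sub, map_sub, map_mul, map_mul, map_mul]
    show πR ρ * toRP (X 2) - πR α * toRP (X 0) - πR β * toRP (X 1) = 0
    linear_combination -h
  obtain ⟨γ, hγ⟩ := Ideal.mem_span_singleton'.mp hmem
  obtain ⟨u, r₀, a₀, b₀, c₀, hr, ha, hb, hc⟩ := clear4 ρ α β γ
  have hS : r₀ * X 2 = a₀ * X 0 + b₀ * X 1 + c₀ * quadElt := by
    apply algS_inj
    simp only [map_add, map_mul]
    rw [hr, ha, hb, hc]
    linear_combination (-(algS ↑u)) * hγ
  have hcc : constantCoeff r₀ = 0 := zmul_S r₀ a₀ b₀ c₀ hS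
  have hr₀ : r₀ ∈ mxIdeal := by
    rw [mxIdeal_eq_ker]
    exact hcc
  have hmap : toRP r₀ ∈ mRP := by
    have h1 : θ r₀ ∈ Ideal.map θ mxIdeal := Ideal.mem_map_of_mem θ hr₀
    have h2 : Ideal.map θ mxIdeal = mRP := by
      rw [mxIdeal, Ideal.map_span]
      rw [Set.image_insert_eq, Set.image_insert_eq, Set.image_singleton]
      rfl
    rw [h2] at h1
    exact h1
  have hAR : θ ↑u * πR ρ = toRP r₀ := by
    rw [← θ_apply, θ, RingHom.comp_apply, ← map_mul, ← hr]; rfl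
  obtain ⟨v, hv⟩ := isUnit_θ u.2
  have : πR ρ = ↑v⁻¹ * toRP r₀ := by
    rw [← hAR, ← hv, Units.inv_mul_cancel_left]
  rw [this]
  exact Ideal.mul_mem_left _ _ hmap

end Localization


section Modules

attribute [local irreducible] instCommRingRP

noncomputable def gmap : (RP × RP) →ₗ[RP] RP :=
  toRP (X 0) • LinearMap.fst RP RP RP + toRP (X 1) • LinearMap.snd RP RP RP

lemma gmap_apply (a b : RP) : gmap (a, b) = toRP (X 0) * a + toRP (X 1) * b := by
  simp [gmap, smul_eq_mul]

noncomputable def fmap : RP →ₗ[RP] RP × RP :=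
  LinearMap.prod ((-(toRP (X 1))) • LinearMap.id) (toRP (X 0) • LinearMap.id)

lemma fmap_apply (r : RP) : fmap r = (-(toRP (X 1)) * r, toRP (X 0) * r) := by
  simp [fmap, smul_eq_mul]

lemma fmap_inj : Function.Injective fmap := by
  rw [← LinearMap.ker_eq_bot, Submodule.eq_bot_iff]
  intro r hr
  rw [LinearMap.mem_ker, fmap_apply, Prod.mk_eq_zero] at hr
  exact RP_xreg r (by linear_combination hr.2)

noncomputable abbrev NI : Submodule RP RP := LinearMap.range gmap

lemma mem_NI (r : RP) : r ∈ NI ↔ ∃ a b : RP, toRP (X 0) * a + toRP (X 1) * b = r := by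
  constructor
  · rintro ⟨⟨a, b⟩, rfl⟩
    exact ⟨a, b, (gmap_apply a b).symm⟩
  · rintro ⟨a, b, hab⟩
    exact ⟨(a, b), by rw [gmap_apply]; exact hab⟩

lemma ker_gmap : LinearMap.ker gmap = LinearMap.range fmap := by
  ext v
  obtain ⟨a, b⟩ := v
  rw [LinearMap.mem_ker, LinearMap.mem_range]
  constructor
  · intro h
    rw [gmap_apply] at h
    obtain ⟨t, h1, h2⟩ := RP_syz a b (by linear_combination h)
    refine ⟨t, ?_⟩
    rw [fmap_apply]
    exact Prod.ext (by rw [h1]; ring) (by rw [h2]; ring)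
  · rintro ⟨t, ht⟩
    rw [fmap_apply, Prod.mk.injEq] at ht
    rw [gmap_apply, ← ht.1, ← ht.2]
    ring

lemma x_mem_NI : toRP (X 0) ∈ NI := (mem_NI _).mpr ⟨1, 0, by ring⟩

lemma y_mem_NI : toRP (X 1) ∈ NI := (mem_NI _).mpr ⟨0, 1, by ring⟩

lemma zsq_mem_NI : toRP (X 2) * toRP (X 2) ∈ NI := by
  obtain ⟨v, hv⟩ := isUnit_θ C_mem_primeCompl
  rw [θ_apply] at hv
  obtain ⟨c, hc⟩ : ∃ c : S, c = C (RatFunc.X + 1) := ⟨_, rfl⟩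
  have hqS : (X 0 : S) * X 0 + X 1 * X 1 - c * (X 2 * X 2) = quadElt := by
    rw [hc, quadElt]; ring
  have h0 := congrArg θ hqS
  simp only [map_sub, map_add, map_mul, θ_apply, toRP_quad] at h0
  rw [hc] at h0
  have hrel : toRP (X 0) * toRP (X 0) + toRP (X 1) * toRP (X 1)
      - toRP (C (RatFunc.X + 1)) * (toRP (X 2) * toRP (X 2)) = 0 := h0
  have h1 : toRP (C (RatFunc.X + 1)) * (toRP (X 2) * toRP (X 2))
      = toRP (X 0) * toRP (X 0) + toRP (X 1) * toRP (X 1) := by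
    linear_combination -hrel
  refine (mem_NI _).mpr ⟨↑v⁻¹ * toRP (X 0), ↑v⁻¹ * toRP (X 1), ?_⟩
  calc toRP (X 0) * (↑v⁻¹ * toRP (X 0)) + toRP (X 1) * (↑v⁻¹ * toRP (X 1))
      = ↑v⁻¹ * (toRP (X 0) * toRP (X 0) + toRP (X 1) * toRP (X 1)) := by ring
    _ = ↑v⁻¹ * (↑v * (toRP (X 2) * toRP (X 2))) := by rw [← h1, hv]
    _ = toRP (X 2) * toRP (X 2) := Units.inv_mul_cancel_left _ _

lemma NI_le_mRP : NI ≤ (mRP : Submodule RP RP) := by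
  intro r hr
  obtain ⟨a, b, hab⟩ := (mem_NI r).mp hr
  rw [← hab]
  have hx : toRP (X 0) ∈ mRP := Ideal.subset_span (by simp)
  have hy : toRP (X 1) ∈ mRP := Ideal.subset_span (by simp)
  exact Ideal.add_mem _ (Ideal.mul_mem_right _ _ hx) (Ideal.mul_mem_right _ _ hy)

lemma z_mem_mRP : toRP (X 2) ∈ mRP := Ideal.subset_span (by simp)

lemma mRP_eq_sup : (mRP : Submodule RP RP) = NI ⊔ Submodule.span RP {toRP (X 2)} := by
  apply le_antisymm
  · rw [mRP, Ideal.span_le]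
    rintro p hp
    rcases hp with rfl | rfl | rfl
    · exact SetLike.le_def.mp le_sup_left x_mem_NI
    · exact SetLike.le_def.mp le_sup_left y_mem_NI
    · exact SetLike.le_def.mp le_sup_right (Submodule.mem_span_singleton_self _)
  · refine sup_le NI_le_mRP ?_
    rw [Submodule.span_le, Set.singleton_subset_iff]
    exact z_mem_mRP

noncomputable def φz : RP →ₗ[RP] RP ⧸ NI :=
  NI.mkQ.comp (toRP (X 2) • LinearMap.id)

lemma φz_apply (r : RP) : φz r = NI.mkQ (toRP (X 2) * r) := by
  simp [φz, smul_eq_mul]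

lemma mRP_le_ker_φz : (mRP : Submodule RP RP) ≤ LinearMap.ker φz := by
  rw [mRP, Ideal.span_le]
  rintro p hp
  rcases hp with rfl | rfl | rfl <;>
  · rw [SetLike.mem_coe, LinearMap.mem_ker, φz_apply, Submodule.mkQ_apply,
      Submodule.Quotient.mk_eq_zero]
    first
      | exact Submodule.smul_mem _ _ x_mem_NI
      | exact Submodule.smul_mem _ _ y_mem_NI
      | exact zsq_mem_NI

noncomputable def f3 : (RP ⧸ mRP) →ₗ[RP] RP ⧸ NI :=
  Submodule.liftQ mRP φz mRP_le_ker_φz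

lemma f3_inj : Function.Injective f3 := by
  rw [← LinearMap.ker_eq_bot]
  apply Submodule.ker_liftQ_eq_bot
  intro r hr
  rw [LinearMap.mem_ker, φz_apply, Submodule.mkQ_apply, Submodule.Quotient.mk_eq_zero] at hr
  obtain ⟨a, b, hab⟩ := (mem_NI _).mp hr
  exact RP_zker r a b (by linear_combination hab)

noncomputable def g3 : (RP ⧸ NI) →ₗ[RP] RP ⧸ mRP :=
  Submodule.mapQ NI mRP LinearMap.id (by simpa using NI_le_mRP)

lemma g3_surj : Function.Surjective g3 := by
  intro q
  obtain ⟨r, rfl⟩ := Submodule.mkQ_surjective (mRP : Submodule RP RP) q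
  refine ⟨NI.mkQ r, ?_⟩
  unfold g3
  rw [Submodule.mkQ_apply, Submodule.mapQ_apply, LinearMap.id_apply, Submodule.mkQ_apply]

lemma range_f3 : LinearMap.range f3 = LinearMap.ker g3 := by
  have h1 : LinearMap.range f3 = Submodule.map NI.mkQ (Submodule.span RP {toRP (X 2)}) := by
    rw [f3, Submodule.range_liftQ, φz, LinearMap.range_comp]
    congr 1
    ext r
    rw [LinearMap.mem_range, Submodule.mem_span_singleton]
    constructor
    · rintro ⟨s, rfl⟩
      exact ⟨s, by simp [smul_eq_mul, mul_comm]⟩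
    · rintro ⟨s, rfl⟩
      exact ⟨s, by simp [smul_eq_mul, mul_comm]⟩
  have h2 : LinearMap.ker g3 = Submodule.map NI.mkQ (mRP : Submodule RP RP) := by
    rw [g3, Submodule.mapQ, Submodule.ker_liftQ, LinearMap.comp_id, Submodule.ker_mkQ]
  rw [h1, h2, mRP_eq_sup, Submodule.map_sup, Submodule.mkQ_map_self, bot_sup_eq]

noncomputable def gres : (RP × RP) →ₗ[RP] NI :=
  gmap.codRestrict NI (fun c => LinearMap.mem_range_self gmap c)

lemma gres_surj : Function.Surjective gres := by
  rintro ⟨r, hr⟩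
  obtain ⟨v, hv⟩ := hr
  exact ⟨v, Subtype.ext hv⟩

lemma range_fmap_eq_ker_gres : LinearMap.range fmap = LinearMap.ker gres := by
  rw [gres, LinearMap.ker_codRestrict]
  exact ker_gmap.symm

end Modules

/-- Each short exact sequence gives the additivity relation in the Grothendieck group. -/
lemma cls_eq_add {R : Type u} [CommRing R] (M₁ M₂ M₃ : Type u)
    [AddCommGroup M₁] [Module R M₁] [Module.Finite R M₁]
    [AddCommGroup M₂] [Module R M₂] [Module.Finite R M₂]
    [AddCommGroup M₃] [Module R M₃] [Module.Finite R M₃]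
    (f : M₁ →ₗ[R] M₂) (g : M₂ →ₗ[R] M₃)
    (hf : Function.Injective f) (hg : Function.Surjective g)
    (hfg : LinearMap.range f = LinearMap.ker g) :
    GGroup.cls R M₂ = GGroup.cls R M₁ + GGroup.cls R M₃ := by
  have hmem : FreeAbelianGroup.of (⟨M₂⟩ : FGModuleRep R) - FreeAbelianGroup.of ⟨M₁⟩
      - FreeAbelianGroup.of ⟨M₃⟩ ∈ sesRelations R :=
    AddSubgroup.subset_closure ⟨⟨M₁⟩, ⟨M₂⟩, ⟨M₃⟩, f, g, hf, hg, hfg, rfl⟩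
  have h0 : (QuotientAddGroup.mk (FreeAbelianGroup.of (⟨M₂⟩ : FGModuleRep R)
      - FreeAbelianGroup.of ⟨M₁⟩ - FreeAbelianGroup.of ⟨M₃⟩) : GGroup R) = 0 :=
    (QuotientAddGroup.eq_zero_iff _).mpr hmem
  rw [QuotientAddGroup.mk_sub, QuotientAddGroup.mk_sub, sub_sub, sub_eq_zero] at h0
  exact h0


end TT

section Aux

attribute [local irreducible] instCommRingRP

lemma TT.two_torsion_aux :
    2 • GGroup.cls RP (RP ⧸ mRP) = 0 := by
  have e0 := TT.cls_eq_add (R := RP) RP (RP × RP) RP (LinearMap.inl RP RP RP)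
    (LinearMap.snd RP RP RP) LinearMap.inl_injective LinearMap.snd_surjective
    (LinearMap.range_inl RP RP RP)
  have e1 := TT.cls_eq_add (R := RP) RP (RP × RP) (↥TT.NI) TT.fmap TT.gres TT.fmap_inj
    TT.gres_surj TT.range_fmap_eq_ker_gres
  have e2 := TT.cls_eq_add (R := RP) (↥TT.NI) RP (RP ⧸ TT.NI) TT.NI.subtype TT.NI.mkQ
    TT.NI.injective_subtype TT.NI.mkQ_surjective
    (by rw [Submodule.range_subtype, Submodule.ker_mkQ])
  have e3 := TT.cls_eq_add (R := RP) (RP ⧸ mRP) (RP ⧸ TT.NI) (RP ⧸ mRP) TT.f3 TT.g3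
    TT.f3_inj TT.g3_surj TT.range_f3
  have h1 : GGroup.cls RP RP = GGroup.cls RP (↥TT.NI) := add_left_cancel (e0.symm.trans e1)
  have h2 : GGroup.cls RP (RP ⧸ TT.NI) = 0 := by
    rw [← h1] at e2
    exact left_eq_add.mp e2
  rw [two_smul, ← e3]
  exact h2

end Aux

/-- `2·[R_P/PR_P] = 0` in `G(R_P)`. -/
theorem class_of_residue_field_is_two_torsion :
    2 • GGroup.cls RP (RP ⧸ mRP) = 0 := by
  exact TT.two_torsion_aux
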